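/- Let 1 ≤ n < d, let E₀ ⊂ ℝ^d be an n-ADR set, and let E₂ ⊂ E₀ ∩ B(0,1) be an Hⁿ-measurable subset with Hⁿ(E₂) ≥ τ > 0 which satisfies the n-dimensional (θ,M)-property for some θ ∈ (0,1) and integer M ≥ 0. Then there exist a constant b ≥ 1 depending only on d, and an Hⁿ-measurable subset E₃ ⊂ E₂ with Hⁿ(E₃) ≥ c > 0 (c depending only on n, d, τ, M, θ and the ADR constants of E₀) such that E₃ satisfies the n-dimensional (θ/b, 0)-property. -/

import Mathlib

open MeasureTheory Metric Module Set
open scoped ENNReal NNReal RealInnerProductSpace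

noncomputable section

/-- Euclidean space `ℝ^d`. -/
abbrev Euc (d : ℕ) : Type := EuclideanSpace ℝ (Fin d)

/-- Orthogonal projection onto a subspace, as a map `ℝ^d → ℝ^d`. -/
noncomputable def projCLM {d : ℕ} (V : Submodule ℝ (Euc d)) : Euc d →L[ℝ] Euc d :=
  V.subtypeL.comp (Submodule.orthogonalProjectionOnto V)

/-- `E` is `n`-Ahlfors–David regular with constants `C₁ ≤ C₂`. -/
def IsADR {d : ℕ} (n : ℕ) (C₁ C₂ : ℝ) (E : Set (Euc d)) : Prop :=
  0 < C₁ ∧ C₁ ≤ C₂ ∧ ∀ x ∈ E, ∀ r : ℝ, 0 < r → ENNReal.ofReal r ≤ EMetric.diam E →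
    ENNReal.ofReal (C₁ * r ^ n) ≤ μH[n] (E ∩ closedBall x r) ∧
      μH[n] (E ∩ closedBall x r) ≤ ENNReal.ofReal (C₂ * r ^ n)

/-- `Γ` is an `n`-dimensional Lipschitz graph with Lipschitz constant at most `M`:
`Γ = {p + A p : p ∈ P}` for an `n`-dimensional subspace `P` and `M`-Lipschitz `A : P → P^⊥`. -/
def IsLipGraph {d : ℕ} (n : ℕ) (M : ℝ≥0) (Γ : Set (Euc d)) : Prop :=
  ∃ (P : Submodule ℝ (Euc d)) (A : P → Pᗮ), finrank ℝ P = n ∧ LipschitzWith M A ∧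
    Γ = {x | ∃ p : P, x = (p : Euc d) + (A p : Euc d)}

/-- `E` has big pieces of Lipschitz graphs with constants `M` and `δ`. -/
def HasBPLG {d : ℕ} (n : ℕ) (M : ℝ≥0) (δ : ℝ) (E : Set (Euc d)) : Prop :=
  0 < δ ∧ ∀ x ∈ E, ∀ r : ℝ, 0 < r → ENNReal.ofReal r ≤ EMetric.diam E →
    ∃ Γ : Set (Euc d), IsLipGraph n M Γ ∧
      ENNReal.ofReal (δ * r ^ n) ≤ μH[n] (E ∩ Γ ∩ closedBall x r)

/-- The coordinate subspace `ℝⁿ × {0} ⊆ ℝ^d`. -/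
def coordSubspace (d n : ℕ) : Submodule ℝ (Euc d) where
  carrier := {x | ∀ i : Fin d, n ≤ (i : ℕ) → x i = 0}
  add_mem' := by
    intro a b ha hb i hi
    simp [PiLp.add_apply, ha i hi, hb i hi]
  zero_mem' := by intro i hi; rfl
  smul_mem' := by
    intro c a ha i hi
    simp [PiLp.smul_apply, ha i hi]

/-- The closed ball of radius `ρ` around `W` in the Grassmannian `G(d,n)`, realised as a set
of subspaces of `ℝ^d`, with the metric `‖V - W‖ = ‖π_V - π_W‖` (operator norm). -/
def grBall {d : ℕ} (n : ℕ) (W : Submodule ℝ (Euc d)) (ρ : ℝ) : Set (Submodule ℝ (Euc d)) :=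
  {V | finrank ℝ V = n ∧ ‖projCLM V - projCLM W‖ ≤ ρ}

/-- The Borel σ-algebra on subspaces of `ℝ^d`, induced by `V ↦ π_V`. -/
instance grassMeasurableSpace (d : ℕ) : MeasurableSpace (Submodule ℝ (Euc d)) :=
  MeasurableSpace.comap (fun V => projCLM V) (borel (Euc d →L[ℝ] Euc d))

/-- The orthogonal group `O(d)`. -/
abbrev OG (d : ℕ) := Matrix.orthogonalGroup (Fin d) ℝ

instance (d : ℕ) : MeasurableSpace (OG d) := borel _

/-- `μ` is the Haar probability measure on the orthogonal group `O(d)`: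
a left-invariant Borel probability measure. -/
def IsHaarProb {d : ℕ} (μ : Measure (OG d)) : Prop :=
  IsProbabilityMeasure μ ∧ ∀ g : OG d, Measure.map (fun h => g * h) μ = μ

/-- The measure `γ_{d,n}` on the Grassmannian: the pushforward of the Haar probability
measure `μ` on `O(d)` under the map `g ↦ g(ℝⁿ × {0})`. -/
def grassmannOf {d : ℕ} (n : ℕ) (μ : Measure (OG d)) : Measure (Submodule ℝ (Euc d)) :=
  Measure.map
    (fun g : OG d => (coordSubspace d n).map
      (Matrix.toEuclideanLin (g : Matrix (Fin d) (Fin d) ℝ))) μ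

/-- The pushforward `π_{V♯}(Hⁿ|_E)` of `Hⁿ` restricted to `E` under the orthogonal
projection onto `V`. -/
def projPush {d : ℕ} (n : ℕ) (E : Set (Euc d)) (V : Submodule ℝ (Euc d)) : Measure (Euc d) :=
  Measure.map (projCLM V) (μH[n].restrict E)

/-- `Hⁿ` on the subspace `V`. -/
def hausdorffOn {d : ℕ} (n : ℕ) (V : Submodule ℝ (Euc d)) : Measure (Euc d) :=
  μH[n].restrict (V : Set (Euc d))

/-- The squared `L²(V)`-norm of the Radon–Nikodym derivative of `π_{V♯}(Hⁿ|_E)` with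
respect to `Hⁿ` on `V`. -/
def pushL2sq {d : ℕ} (n : ℕ) (E : Set (Euc d)) (V : Submodule ℝ (Euc d)) : ℝ≥0∞ :=
  ∫⁻ z, ((projPush n E V).rnDeriv (hausdorffOn n V) z) ^ 2 ∂(hausdorffOn n V)

/-- `π_{V♯}(Hⁿ|_E) ∈ L²(V)`: the pushforward is absolutely continuous with respect to `Hⁿ`
on `V`, with square-integrable density. -/
def MemL2 {d : ℕ} (n : ℕ) (E : Set (Euc d)) (V : Submodule ℝ (Euc d)) : Prop :=
  projPush n E V ≪ hausdorffOn n V ∧ pushL2sq n E V < ∞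

/-- The (two-sided) cone `X(x, V, α) = {y : |π_{V^⊥}(x - y)| ≤ α |x - y|}`. -/
def cone {d : ℕ} (V : Submodule ℝ (Euc d)) (x : Euc d) (α : ℝ) : Set (Euc d) :=
  {y | ‖projCLM Vᗮ (x - y)‖ ≤ α * ‖x - y‖}

/-- The truncated cone `X(x, V, α, R, r)`. -/
def coneAnn {d : ℕ} (V : Submodule ℝ (Euc d)) (x : Euc d) (α R r : ℝ) : Set (Euc d) :=
  cone V x α ∩ (closedBall x R \ ball x r)

/-- The vertical cone `X(x, α) := X(x, {0} × ℝ^{d-n}, α) = {y : |π_{ℝⁿ×{0}}(x-y)| ≤ α|x-y|}`. -/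
def vertCone {d : ℕ} (n : ℕ) (x : Euc d) (α : ℝ) : Set (Euc d) :=
  {y | ‖projCLM (coordSubspace d n) (x - y)‖ ≤ α * ‖x - y‖}

/-- The truncated vertical cone `X(x, α, R, r)`. -/
def vertConeAnn {d : ℕ} (n : ℕ) (x : Euc d) (α R r : ℝ) : Set (Euc d) :=
  vertCone n x α ∩ (closedBall x R \ ball x r)

/-- `E` satisfies the `n`-dimensional `(θ, M)`-property: for every `x ∈ E` at most `M`
dyadic scales `j` have `X(x, θ, 2^{-j}, 2^{-j-1}) ∩ E ≠ ∅`. -/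
def ThetaMProp {d : ℕ} (n : ℕ) (θ : ℝ) (M : ℕ) (E : Set (Euc d)) : Prop :=
  ∀ x ∈ E,
    {j : ℤ | (vertConeAnn n x θ (2 ^ (-j)) (2 ^ (-j - 1)) ∩ E).Nonempty}.Finite ∧
    {j : ℤ | (vertConeAnn n x θ (2 ^ (-j)) (2 ^ (-j - 1)) ∩ E).Nonempty}.ncard ≤ M

/-- The one-sided cone `X⁺(x, w, α)` in direction `w`. -/
def oneSidedCone {d : ℕ} (w : Euc d) (x : Euc d) (α : ℝ) : Set (Euc d) :=
  {y | ‖projCLM (Submodule.span ℝ {w})ᗮ (x - y)‖ ≤ α * ‖x - y‖ ∧ 0 ≤ ⟪y - x, w⟫}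

/-- The truncated one-sided cone `X⁺(x, w, α, R, r)`. -/
def oneSidedConeAnn {d : ℕ} (w : Euc d) (x : Euc d) (α R r : ℝ) : Set (Euc d) :=
  oneSidedCone w x α ∩ (closedBall x R \ ball x r)

/-- Combining `x ∈ ℝⁿ` and `y ∈ ℝ^{d-n}` into a point of `ℝ^d = ℝⁿ × ℝ^{d-n}`. -/
def pairFun {d n : ℕ} (x : Euc n) (y : Euc (d - n)) : Euc d :=
  WithLp.toLp 2 (fun i : Fin d => if h' : (i : ℕ) < n then x ⟨i, h'⟩ else y ⟨(i : ℕ) - n, by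
    have := i.isLt; omega⟩)

namespace Stmt4Aux


/-- The set of reals all of whose relevant dyadic "digits" are small. -/
def Zset (S : Finset ℤ) : Set ℝ := {z | ∀ s ∈ S, Int.fract ((2:ℝ)^s * z) < 1/8}

lemma measurableSet_Zset (S : Finset ℤ) : MeasurableSet (Zset S) := by
  have h : Zset S = ⋂ s ∈ (S : Set ℤ), {z : ℝ | Int.fract ((2:ℝ)^s * z) < 1/8} := by
    ext z; simp [Zset]
  rw [h]
  exact MeasurableSet.biInter S.countable_toSet (fun s _ =>
    measurableSet_lt (measurable_fract.comp (measurable_id.const_mul _)) measurable_const)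

lemma le_two_of_even_lt {a b : ℤ} (ha : Even a) (hb : Even b) (h : a < b) : a + 2 ≤ b := by
  obtain ⟨x, hx⟩ := ha; obtain ⟨y, hy⟩ := hb; omega

lemma zset_volume : ∀ (N : ℕ) (S : Finset ℤ), S.card = N → (∀ s ∈ S, Even s) →
    ∀ q k : ℤ, (∀ s ∈ S, q - 1 ≤ s) →
    ENNReal.ofReal ((8:ℝ)^(-(N:ℤ)) * 2^(-q)) ≤
      volume (Zset S ∩ Set.Ico ((k:ℝ) * 2^(1-q)) ((k:ℝ) * 2^(1-q) + 2^(-q))) := by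
  intro N
  induction N using Nat.strong_induction_on with
  | _ N ih =>
    intro S hcard heven q k hq
    rcases S.eq_empty_or_nonempty with rfl | hne
    · have hZ : Zset ∅ = univ := by ext z; simp [Zset]
      rw [hZ, univ_inter, Real.volume_Ico]
      apply ENNReal.ofReal_le_ofReal
      have : (k:ℝ) * 2^(1-q) + 2^(-q) - (k:ℝ)*2^(1-q) = 2^(-q) := by ring
      rw [this]
      simp at hcard
      subst hcard
      simp
    · set s₀ := S.min' hne with hs₀def
      have hs₀S : s₀ ∈ S := S.min'_mem hne
      have hs₀min : ∀ s ∈ S, s₀ ≤ s := fun s hs => S.min'_le s hs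
      set S' := S.erase s₀ with hS'def
      have hN1 : 1 ≤ N := hcard ▸ Finset.card_pos.2 hne
      have hcard' : S'.card = N - 1 := by rw [hS'def, Finset.card_erase_of_mem hs₀S, hcard]
      have hNlt : N - 1 < N := by omega
      have heven' : ∀ s ∈ S', Even s := fun s hs => heven s (Finset.mem_of_mem_erase hs)
      have hgap : ∀ s ∈ S', s₀ + 2 ≤ s := by
        intro s hs
        have h1 : s₀ < s := lt_of_le_of_ne (hs₀min s (Finset.mem_of_mem_erase hs))
          (Ne.symm (Finset.ne_of_mem_erase hs))
        exact le_two_of_even_lt (heven _ hs₀S) (heven _ (Finset.mem_of_mem_erase hs)) h1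
      have hq' : ∀ s ∈ S', (s₀ + 3) - 1 ≤ s := fun s hs => by linarith [hgap s hs]
      have h8 : (8:ℝ)^(-(((N - 1 : ℕ)):ℤ)) = 8 * (8:ℝ)^(-(N:ℤ)) := by
        rw [Nat.cast_sub hN1]
        rw [neg_sub, sub_eq_add_neg, zpow_add₀ (by norm_num : (8:ℝ) ≠ 0)]
        norm_num
      have two_ne : (2:ℝ) ≠ 0 := two_ne_zero
      -- the subinterval Zset S' bound, for any integer g, on [g·2^{-s₀}, g·2^{-s₀}+2^{-(s₀+3)})
      have key : ∀ g : ℤ,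
          ENNReal.ofReal (8 * (8:ℝ)^(-(N:ℤ)) * 2^(-(s₀+3))) ≤
          volume (Zset S' ∩ Set.Ico ((g:ℝ) * 2^(-s₀)) ((g:ℝ) * 2^(-s₀) + 2^(-(s₀+3)))) := by
        intro g
        have := ih (N-1) hNlt S' hcard' heven' (s₀+3) (4*g) hq'
        have hrw : ((4*g : ℤ):ℝ) * 2^(1-(s₀+3)) = (g:ℝ) * 2^(-s₀) := by
          push_cast
          rw [show (1-(s₀+3)) = (-s₀) + (-2) by ring, zpow_add₀ two_ne]
          norm_num
          ring
        rw [hrw, h8] at this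
        exact this
      -- each such subinterval is inside Zset {s₀} provided it is aligned: fract (2^s₀ z) small
      have frac_small : ∀ g : ℤ, ∀ z ∈ Set.Ico ((g:ℝ) * 2^(-s₀)) ((g:ℝ) * 2^(-s₀) + 2^(-(s₀+3))),
          Int.fract ((2:ℝ)^s₀ * z) < 1/8 := by
        intro g z hz
        have hpow : (2:ℝ)^s₀ * ((g:ℝ) * 2^(-s₀)) = (g:ℝ) := by
          rw [show (2:ℝ)^s₀ * ((g:ℝ) * 2^(-s₀)) = (g:ℝ) * ((2:ℝ)^s₀ * 2^(-s₀)) by ring,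
            ← zpow_add₀ two_ne]
          simp
        have hsplit : (2:ℝ)^s₀ * z = (g:ℝ) + (2:ℝ)^s₀ * (z - (g:ℝ) * 2^(-s₀)) := by
          rw [mul_sub, hpow]; ring
        have h0 : (0:ℝ) ≤ (2:ℝ)^s₀ * (z - (g:ℝ) * 2^(-s₀)) := by
          have := hz.1
          have hp : (0:ℝ) < (2:ℝ)^s₀ := zpow_pos (by norm_num) _
          nlinarith
        have h1 : (2:ℝ)^s₀ * (z - (g:ℝ) * 2^(-s₀)) < 1/8 := by
          have hlt : z - (g:ℝ) * 2^(-s₀) < 2^(-(s₀+3)) := by linarith [hz.2]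
          have hp : (0:ℝ) < (2:ℝ)^s₀ := zpow_pos (by norm_num) _
          have : (2:ℝ)^s₀ * (z - (g:ℝ)*2^(-s₀)) < (2:ℝ)^s₀ * 2^(-(s₀+3)) := by
            exact mul_lt_mul_of_pos_left hlt hp
          refine lt_of_lt_of_le this ?_
          rw [← zpow_add₀ two_ne]
          rw [show s₀ + -(s₀+3) = -3 by ring]
          norm_num
        rw [hsplit, Int.fract_intCast_add, Int.fract_eq_self.2 ⟨h0, by linarith⟩]
        exact h1
      rcases eq_or_lt_of_le (hq s₀ hs₀S) with hB | hA
      · -- Case B : q - 1 = s₀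
        have hkey := key k
        have hrw : ((k : ℤ):ℝ) * 2^(-s₀) = (k:ℝ) * 2^(1-q) := by
          rw [show -s₀ = 1 - q by omega]
        rw [hrw] at hkey
        refine le_trans ?_ (le_trans hkey (measure_mono ?_))
        · apply ENNReal.ofReal_le_ofReal
          have h1 : (2:ℝ)^(-(s₀+3)) = 2^(-q) * (2:ℝ)^(-2:ℤ) := by
            rw [← zpow_add₀ two_ne]
            congr 1
            omega
          have h4 : (2:ℝ)^(-2:ℤ) = 1/4 := by norm_num
          have h2 : (0:ℝ) < (8:ℝ)^(-(N:ℤ)) := zpow_pos (by norm_num) _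
          have h3 : (0:ℝ) < (2:ℝ)^(-q) := zpow_pos (by norm_num) _
          rw [h1, h4]; nlinarith
        · intro z hz
          rcases hz with ⟨hz1, hz2⟩
          constructor
          · intro s hs
            rcases eq_or_ne s s₀ with rfl | hne'
            · exact frac_small k z (by rw [hrw]; exact hz2)
            · exact hz1 s (Finset.mem_erase.2 ⟨hne', hs⟩)
          · constructor
            · exact hz2.1
            · refine lt_of_lt_of_le hz2.2 ?_
              have : (2:ℝ)^(-(s₀+3)) ≤ 2^(-q) := by
                apply zpow_le_zpow_right₀ (by norm_num) (by omega)
              linarith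
      · -- Case A : q ≤ s₀
        have hqs : q ≤ s₀ := by omega
        set e : ℕ := (s₀ - q).toNat with he
        have he' : (e : ℤ) = s₀ - q := Int.toNat_of_nonneg (by omega)
        set t : ℝ := (k:ℝ) * 2^(1-q) with ht
        set δ : ℝ := (2:ℝ)^(-(s₀+3)) with hδ
        have hδpos : 0 < δ := zpow_pos (by norm_num) _
        set g : ℕ → ℤ := fun i => k * 2^(e+1) + i with hg
        set c : ℕ → ℝ := fun i => ((g i : ℤ):ℝ) * 2^(-s₀) with hc
        have hpow2 : (2:ℝ)^(1-q) = ((2^(e+1) : ℕ):ℝ) * 2^(-s₀) := by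
          rw [show ((2^(e+1):ℕ):ℝ) = (2:ℝ)^((e+1 : ℕ):ℤ) by
            rw [zpow_natCast]; push_cast; ring]
          rw [← zpow_add₀ two_ne]
          congr 1
          push_cast
          omega
        have hct : ∀ i : ℕ, c i = t + (i:ℝ) * 2^(-s₀) := by
          intro i
          simp only [hc, hg, ht, hpow2]
          push_cast
          ring
        set u : ℕ → Set ℝ := fun i => Zset S' ∩ Set.Ico (c i) (c i + δ) with hu
        have hui : ∀ i, ENNReal.ofReal (8 * (8:ℝ)^(-(N:ℤ)) * δ) ≤ volume (u i) :=
          fun i => key (g i)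
      -- u i ⊆ Zset S ∩ Ico t (t + 2^{-q})
        have husub : ∀ i ∈ Finset.range (2^e), u i ⊆ Zset S ∩ Set.Ico t (t + 2^(-q)) := by
          intro i hi z hz
          rcases hz with ⟨hz1, hz2⟩
          have hiR : (i:ℝ) ≤ (2:ℝ)^e - 1 := by
            have : (i:ℝ) + 1 ≤ ((2^e : ℕ) : ℝ) := by
              exact_mod_cast Nat.succ_le_of_lt (Finset.mem_range.1 hi)
            push_cast at this
            linarith
          constructor
          · intro s hs
            rcases eq_or_ne s s₀ with rfl | hne'
            · exact frac_small (g i) z hz2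
            · exact hz1 s (Finset.mem_erase.2 ⟨hne', hs⟩)
          · constructor
            · refine le_trans ?_ hz2.1
              rw [hct i]
              have : (0:ℝ) ≤ (i:ℝ) * 2^(-s₀) := by positivity
              linarith
            · refine lt_of_lt_of_le hz2.2 ?_
              rw [hct i]
              have h2q : (2:ℝ)^(-q : ℤ) = (2:ℝ)^e * 2^(-s₀) := by
                rw [← zpow_natCast (2:ℝ) e, ← zpow_add₀ two_ne]
                congr 1
                omega
              have h3 : δ ≤ 2^(-s₀) := by
                rw [hδ]
                apply zpow_le_zpow_right₀ (by norm_num) (by omega)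
              have h4 : ((i:ℝ)+1) * 2^(-s₀) ≤ (2:ℝ)^e * 2^(-s₀) := by
                apply mul_le_mul_of_nonneg_right _ (le_of_lt (zpow_pos (by norm_num) _))
                linarith
              rw [h2q]
              nlinarith [zpow_pos (show (0:ℝ) < 2 by norm_num) (-s₀)]
        have hdisj : (Finset.range (2^e) : Set ℕ).PairwiseDisjoint u := by
          intro i _ j _ hij
          have : Disjoint (Set.Ico (c i) (c i + δ)) (Set.Ico (c j) (c j + δ)) := by
            rw [Set.Ico_disjoint_Ico]
            rcases hij.lt_or_gt with h | h
            · apply min_le_of_left_le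
              apply le_max_of_le_right
              rw [hct i, hct j]
              have : ((i:ℝ)+1) * 2^(-s₀) ≤ (j:ℝ) * 2^(-s₀) := by
                apply mul_le_mul_of_nonneg_right _ (le_of_lt (zpow_pos (by norm_num) _))
                exact_mod_cast h
              have h3 : δ ≤ 2^(-s₀) := by
                rw [hδ]; apply zpow_le_zpow_right₀ (by norm_num) (by omega)
              nlinarith [zpow_pos (show (0:ℝ) < 2 by norm_num) (-s₀)]
            · apply min_le_of_right_le
              apply le_max_of_le_left
              rw [hct i, hct j]
              have : ((j:ℝ)+1) * 2^(-s₀) ≤ (i:ℝ) * 2^(-s₀) := by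
                apply mul_le_mul_of_nonneg_right _ (le_of_lt (zpow_pos (by norm_num) _))
                exact_mod_cast h
              have h3 : δ ≤ 2^(-s₀) := by
                rw [hδ]; apply zpow_le_zpow_right₀ (by norm_num) (by omega)
              nlinarith [zpow_pos (show (0:ℝ) < 2 by norm_num) (-s₀)]
          exact Disjoint.mono inter_subset_right inter_subset_right this
        have humeas : ∀ i ∈ Finset.range (2^e), MeasurableSet (u i) :=
          fun i _ => (measurableSet_Zset S').inter measurableSet_Ico
        have hsum : volume (⋃ i ∈ Finset.range (2^e), u i)
            = ∑ i ∈ Finset.range (2^e), volume (u i) :=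
          measure_biUnion_finset hdisj humeas
        refine le_trans ?_ (measure_mono (Set.iUnion₂_subset husub))
        rw [hsum]
        have hsum2 : ∑ i ∈ Finset.range (2^e), ENNReal.ofReal (8 * (8:ℝ)^(-(N:ℤ)) * δ)
            ≤ ∑ i ∈ Finset.range (2^e), volume (u i) :=
          Finset.sum_le_sum (fun i _ => hui i)
        refine le_trans ?_ hsum2
        rw [Finset.sum_const, Finset.card_range, nsmul_eq_mul]
        rw [show ((2^e : ℕ) : ℝ≥0∞) = ENNReal.ofReal ((2^e : ℕ) : ℝ) by
          rw [ENNReal.ofReal_natCast]]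
        rw [← ENNReal.ofReal_mul (by positivity)]
        apply ENNReal.ofReal_le_ofReal
        have harith : ((2^e : ℕ) : ℝ) * (8 * (8:ℝ)^(-(N:ℤ)) * δ) = (8:ℝ)^(-(N:ℤ)) * 2^(-q) := by
          rw [hδ]
          push_cast
          rw [← zpow_natCast (2:ℝ) e, he']
          rw [show (8:ℝ) = 2^(3:ℤ) by norm_num]
          rw [show (2:ℝ)^(s₀-q) * ((2:ℝ)^(3:ℤ) * ((2:ℝ)^(3:ℤ))^(-(N:ℤ)) * 2^(-(s₀+3)))
              = ((2:ℝ)^(3:ℤ))^(-(N:ℤ)) * ((2:ℝ)^(s₀-q) * (2:ℝ)^(3:ℤ) * 2^(-(s₀+3))) by ring]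
          congr 1
          rw [← zpow_add₀ two_ne, ← zpow_add₀ two_ne]
          congr 1
          ring
        rw [harith]



lemma projCLM_coord_apply {d n : ℕ} (z : Euc d) :
    projCLM (coordSubspace d n) z = (WithLp.toLp 2 (fun i : Fin d => if (i : ℕ) < n then z i else 0) : Euc d) := by
  set v : Euc d := (WithLp.toLp 2 (fun i : Fin d => if (i : ℕ) < n then z i else 0) : Euc d) with hv
  have hvmem : v ∈ coordSubspace d n := by
    intro i hi
    simp only [hv, PiLp.toLp_apply]
    exact if_neg (by omega)
  have horth : z - v ∈ (coordSubspace d n)ᗮ := by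
    rw [Submodule.mem_orthogonal]
    intro u hu
    have : ∀ i : Fin d, u i * (z - v) i = 0 := by
      intro i
      by_cases h : (i:ℕ) < n
      · have : (z - v) i = 0 := by
          simp only [PiLp.sub_apply, hv, PiLp.toLp_apply, if_pos h, sub_self]
        rw [this, mul_zero]
      · rw [hu i (by omega), zero_mul]
    rw [PiLp.inner_apply]
    simp only [RCLike.inner_apply, conj_trivial]
    exact Finset.sum_eq_zero (fun i _ => by rw [mul_comm]; exact this i)
  show (↑(Submodule.orthogonalProjectionOnto (coordSubspace d n) z) : Euc d) = v
  exact Submodule.eq_starProjection_of_mem_orthogonal hvmem horth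

lemma normsq_eq_sum {d : ℕ} (z : Euc d) : ‖z‖^2 = ∑ i, (z i)^2 := by
  rw [← real_inner_self_eq_norm_sq, PiLp.inner_apply]
  simp only [RCLike.inner_apply, conj_trivial]
  exact Finset.sum_congr rfl (fun i _ => by ring)

lemma proj_normsq {d n : ℕ} (z : Euc d) :
    ‖projCLM (coordSubspace d n) z‖^2 = ∑ i ∈ Finset.univ.filter (fun i : Fin d => (i:ℕ) < n), (z i)^2 := by
  rw [projCLM_coord_apply, normsq_eq_sum]
  rw [← Finset.sum_filter_add_sum_filter_not Finset.univ (fun i : Fin d => (i:ℕ) < n)]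
  have h2 : ∑ i ∈ Finset.univ.filter (fun i : Fin d => ¬ (i:ℕ) < n),
      ((WithLp.toLp 2 (fun i : Fin d => if (i : ℕ) < n then z i else 0) : Euc d) i)^2 = 0 := by
    apply Finset.sum_eq_zero
    intro i hi
    rw [Finset.mem_filter] at hi
    simp only [PiLp.toLp_apply, if_neg hi.2]
    ring
  rw [h2, add_zero]
  apply Finset.sum_congr rfl
  intro i hi
  rw [Finset.mem_filter] at hi
  simp only [PiLp.toLp_apply]
  rw [if_pos hi.2]

/-- If the projection of `z` to the first `n` coordinates is at most half of `‖z‖`,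
then some vertical coordinate is large. -/
lemma exists_big_coord {d n : ℕ} (hnd : n < d) (z : Euc d)
    (hP : ‖projCLM (coordSubspace d n) z‖^2 ≤ (1/4) * ‖z‖^2) :
    ∃ ℓ : Fin d, n ≤ (ℓ:ℕ) ∧ ‖z‖^2 / (2*d) ≤ (z ℓ)^2 := by
  set F := Finset.univ.filter (fun i : Fin d => ¬ (i:ℕ) < n) with hF
  have hsum : ∑ i ∈ F, (z i)^2 ≥ (3/4) * ‖z‖^2 := by
    have h1 := normsq_eq_sum z
    have h2 := proj_normsq (n := n) z
    rw [← Finset.sum_filter_add_sum_filter_not Finset.univ (fun i : Fin d => (i:ℕ) < n)] at h1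
    rw [← h2] at h1
    have := hP
    nlinarith [sq_nonneg ‖z‖]
  by_contra hcon
  push_neg at hcon
  have hne : F.Nonempty := ⟨⟨n, hnd⟩, by simp [hF]⟩
  have hlt : ∀ i ∈ F, (z i)^2 < ‖z‖^2 / (2*d) := by
    intro i hi
    have := hcon i (by rw [hF, Finset.mem_filter] at hi; omega)
    exact this
  have hsumlt : ∑ i ∈ F, (z i)^2 < ∑ i ∈ F, ‖z‖^2 / (2*d) :=
    Finset.sum_lt_sum_of_nonempty hne hlt
  rw [Finset.sum_const] at hsumlt
  have hcard : (F.card : ℝ) ≤ d := by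
    have := F.card_le_univ
    simp only [Finset.card_univ, Fintype.card_fin] at this
    exact_mod_cast this
  have hdpos : (0:ℝ) < d := by exact_mod_cast (by omega : 0 < d)
  rw [nsmul_eq_mul] at hsumlt
  set X := ‖z‖^2 with hX
  have hX0 : 0 ≤ X := sq_nonneg _
  have hw0 : 0 ≤ X / (2*d) := by positivity
  have h5 : (F.card : ℝ) * (X / (2*d)) ≤ (d:ℝ) * (X / (2*d)) :=
    mul_le_mul_of_nonneg_right hcard hw0
  have h6 : (d:ℝ) * (X / (2*d)) = X / 2 := by
    field_simp
  linarith

end Stmt4Aux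

set_option maxHeartbeats 2000000 in
open Stmt4Aux in
/-- the main proposition. A set with the `(θ, M)`-property contains a large
subset with the `(θ/b, 0)`-property, where `b ≥ 1` depends only on `d`. -/
theorem stmt4 (d : ℕ) :
    ∃ b : ℝ, 1 ≤ b ∧
      ∀ (n M : ℕ) (τ θ C₁ C₂ : ℝ), 1 ≤ n → n < d → 0 < τ → 0 < θ → θ < 1 →
        ∃ c : ℝ, 0 < c ∧
          ∀ E₀ E₂ : Set (Euc d), IsADR n C₁ C₂ E₀ → MeasurableSet E₂ →
            E₂ ⊆ E₀ ∩ closedBall 0 1 → ENNReal.ofReal τ ≤ μH[n] E₂ →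
            ThetaMProp n θ M E₂ →
            ∃ E₃ : Set (Euc d), MeasurableSet E₃ ∧ E₃ ⊆ E₂ ∧
              ENNReal.ofReal c ≤ μH[n] E₃ ∧ ThetaMProp n (θ / b) 0 E₃ := by
  refine ⟨2, one_le_two, ?_⟩
  intro n M τ θ C₁ C₂ hn1 hnd hτ hθ0 hθ1
  have two_ne : (2:ℝ) ≠ 0 := two_ne_zero
  set K₀ : ℕ := (d + 4) * M with hK₀def
  set ρ : ℝ := 16 * (8:ℝ)^(-(K₀:ℤ)) with hρdef
  have hρpos : 0 < ρ := by
    have : (0:ℝ) < (8:ℝ)^(-(K₀:ℤ)) := zpow_pos (by norm_num) _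
    rw [hρdef]; linarith
  set c : ℝ := (τ / 4) * (ρ / 48)^d with hcdef
  refine ⟨c, by positivity, ?_⟩
  intro E₀ E₂ hADR hE₂m hE₂sub hτE hTM
  have hτ2 : (0:ℝ) < τ/2 := by linarith
  -- E₂ is nonempty
  have hE₂ne : E₂.Nonempty := by
    rcases E₂.eq_empty_or_nonempty with h | h
    · exfalso
      rw [h, measure_empty] at hτE
      exact absurd hτE (by simpa using (ENNReal.ofReal_pos.2 hτ).not_ge)
    · exact h
  obtain ⟨x₀, hx₀⟩ := hE₂ne
  have hx₀E₀ : x₀ ∈ E₀ := (hE₂sub hx₀).1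
  obtain ⟨hC₁, hC₁₂, hADRb⟩ := hADR
  -- μH[n] E₂ is finite
  have hfinE₂ : μH[n] E₂ < ∞ := by
    rcases le_or_gt (ENNReal.ofReal 2) (EMetric.diam E₀) with hd2 | hd2
    · have hup := (hADRb x₀ hx₀E₀ 2 (by norm_num) hd2).2
      have hsub : E₂ ⊆ E₀ ∩ closedBall x₀ 2 := by
        intro y hy
        refine ⟨(hE₂sub hy).1, mem_closedBall.2 ?_⟩
        have h1 : dist y 0 ≤ 1 := mem_closedBall.1 (hE₂sub hy).2
        have h2 : dist x₀ 0 ≤ 1 := mem_closedBall.1 (hE₂sub hx₀).2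
        have h3 := dist_triangle_right y x₀ 0
        linarith
      exact lt_of_le_of_lt (le_trans (measure_mono hsub) hup) ENNReal.ofReal_lt_top
    · have hdne : EMetric.diam E₀ ≠ ∞ := (hd2.trans_le le_top).ne
      rcases eq_or_ne (EMetric.diam E₀) 0 with h0 | h0
      · have hsub0 : E₀.Subsingleton := EMetric.diam_eq_zero_iff.1 h0
        have hsubs : E₂ ⊆ {x₀} := fun y hy => hsub0 (hE₂sub hy).1 hx₀E₀
        haveI := MeasureTheory.Measure.noAtoms_hausdorff (Euc d)
          (show 0 < (n:ℝ) by exact_mod_cast (by omega : 0 < n))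
        refine lt_of_le_of_lt (measure_mono hsubs) ?_
        rw [measure_singleton]
        exact ENNReal.zero_lt_top
      · set r : ℝ := (EMetric.diam E₀).toReal with hr
        have hrpos : 0 < r := ENNReal.toReal_pos h0 hdne
        have hrdiam : ENNReal.ofReal r ≤ EMetric.diam E₀ := by
          rw [hr, ENNReal.ofReal_toReal hdne]
        have hup := (hADRb x₀ hx₀E₀ r hrpos hrdiam).2
        have hsub : E₂ ⊆ E₀ ∩ closedBall x₀ r := by
          intro y hy
          refine ⟨(hE₂sub hy).1, mem_closedBall.2 ?_⟩
          have hed : edist y x₀ ≤ EMetric.diam E₀ :=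
            EMetric.edist_le_diam_of_mem (hE₂sub hy).1 hx₀E₀
          have := ENNReal.toReal_mono hdne hed
          rwa [dist_edist]
        exact lt_of_le_of_lt (le_trans (measure_mono hsub) hup) ENNReal.ofReal_lt_top
  -- a closed (hence compact) subset K of E₂ with at least half the measure
  haveI hfinres : IsFiniteMeasure (μH[n].restrict E₂) :=
    ⟨by rw [Measure.restrict_apply_univ]; exact hfinE₂⟩
  obtain ⟨K, hKE₂, hKclosed, hKlt⟩ :=
    hE₂m.exists_isClosed_lt_add (μ := μH[n].restrict E₂)
      (by rw [Measure.restrict_apply hE₂m, inter_self]; exact hfinE₂.ne)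
      (ε := ENNReal.ofReal (τ/2)) (ENNReal.ofReal_pos.2 hτ2).ne'
  have hKmeas : MeasurableSet K := hKclosed.measurableSet
  have hμK : ENNReal.ofReal (τ/2) ≤ μH[n] K := by
    rw [Measure.restrict_apply hE₂m, inter_self,
      Measure.restrict_apply hKmeas, inter_eq_self_of_subset_left hKE₂] at hKlt
    have hsum : ENNReal.ofReal (τ/2) + ENNReal.ofReal (τ/2) ≤ μH[n] E₂ := by
      rw [← ENNReal.ofReal_add (le_of_lt hτ2) (le_of_lt hτ2),
        show τ/2 + τ/2 = τ by ring]
      exact hτE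
    have hlt := lt_of_le_of_lt hsum hKlt
    rw [ENNReal.add_lt_add_iff_right ENNReal.ofReal_ne_top] at hlt
    exact hlt.le
  have hKball : K ⊆ closedBall 0 1 := fun x hx => (hE₂sub (hKE₂ hx)).2
  have hKcomp : IsCompact K := Metric.isCompact_of_isClosed_isBounded hKclosed
    (Metric.isBounded_closedBall.subset hKball)
  -- the set of points with a bad cone at scale j, relative to K
  set Sj : ℤ → Set (Euc d) :=
    fun j => {x : Euc d | (vertConeAnn n x θ (2^(-j)) (2^(-j-1)) ∩ K).Nonempty} with hSjdef
  have hSjclosed : ∀ j : ℤ, IsClosed (Sj j) := by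
    intro j
    set T : Set (Euc d × Euc d) :=
      {p | p.2 ∈ K ∧ (dist p.2 p.1 ≤ 2^(-j) ∧ ((2:ℝ)^(-j-1) ≤ dist p.2 p.1 ∧
        ‖projCLM (coordSubspace d n) (p.1 - p.2)‖ ≤ θ * ‖p.1 - p.2‖))} with hT
    have hcont1 : Continuous fun p : Euc d × Euc d => dist p.2 p.1 :=
      continuous_snd.dist continuous_fst
    have hcont2 : Continuous fun p : Euc d × Euc d =>
        ‖projCLM (coordSubspace d n) (p.1 - p.2)‖ :=
      ((projCLM (coordSubspace d n)).continuous.comp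
        (continuous_fst.sub continuous_snd)).norm
    have hcont3 : Continuous fun p : Euc d × Euc d => θ * ‖p.1 - p.2‖ :=
      continuous_const.mul (continuous_fst.sub continuous_snd).norm
    have hTclosed : IsClosed T := by
      rw [hT]
      simp only [setOf_and]
      exact ((hKclosed.preimage continuous_snd).inter
        ((isClosed_le hcont1 continuous_const).inter
          ((isClosed_le continuous_const hcont1).inter (isClosed_le hcont2 hcont3))))
    have hTbdd : Bornology.IsBounded T := by
      refine ((Metric.isBounded_closedBall (x := (0:Euc d)) (r := 1 + 2^(-j))).prod
        (Metric.isBounded_closedBall (x := (0:Euc d)) (r := 1))).subset ?_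
      rintro ⟨x, y⟩ ⟨hyK, hdxy, -⟩
      have h1 : dist y 0 ≤ 1 := mem_closedBall.1 (hKball hyK)
      refine Set.mem_prod.2 ⟨mem_closedBall.2 ?_, mem_closedBall.2 h1⟩
      have h2 := dist_triangle x y 0
      have h3 : dist x y ≤ 2^(-j) := by rw [dist_comm]; exact hdxy
      linarith
    have hTcomp : IsCompact T := Metric.isCompact_of_isClosed_isBounded hTclosed hTbdd
    have himg : Sj j = Prod.fst '' T := by
      ext x
      constructor
      · rintro ⟨y, ⟨⟨hcone, hyball⟩, hyK⟩⟩
        exact ⟨(x, y), ⟨hyK, hyball.1, not_lt.1 hyball.2, hcone⟩, rfl⟩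
      · rintro ⟨⟨x', y⟩, ⟨hyK, h1, h2, h3⟩, rfl⟩
        exact ⟨y, ⟨⟨h3, h1, not_lt.2 h2⟩, hyK⟩⟩
    rw [himg]
    exact (hTcomp.image continuous_fst).isClosed
  -- scales are bounded below
  have hjge : ∀ j : ℤ, ∀ x ∈ K, x ∈ Sj j → (-2:ℤ) ≤ j := by
    rintro j x hxK ⟨y, ⟨⟨-, hyball⟩, hyK⟩⟩
    have h1 : (2:ℝ)^(-j-1) ≤ dist y x := not_lt.1 hyball.2
    have h2 : dist y x ≤ 2 := by
      have hy1 : dist y 0 ≤ 1 := mem_closedBall.1 (hKball hyK)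
      have hx1 : dist x 0 ≤ 1 := mem_closedBall.1 (hKball hxK)
      have := dist_triangle_right y x 0
      linarith
    have h3 : (2:ℝ)^(-j-1) ≤ (2:ℝ)^(1:ℤ) := by
      refine le_trans (le_trans h1 h2) ?_
      norm_num
    have h4 := (zpow_le_zpow_iff_right₀ (by norm_num : (1:ℝ) < 2)).1 h3
    omega
  -- the sets of bad scales are finite of cardinality at most M
  have hBfin : ∀ x, x ∈ K → {j : ℤ | x ∈ Sj j}.Finite := by
    intro x hx
    refine Set.Finite.subset (hTM x (hKE₂ hx)).1 ?_
    rintro j ⟨y, hy, hyK⟩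
    exact ⟨y, hy, hKE₂ hyK⟩
  have hBcard : ∀ x, ∀ hx : x ∈ K, ((hBfin x hx).toFinset).card ≤ M := by
    intro x hx
    rw [← Set.ncard_eq_toFinset_card _ (hBfin x hx)]
    refine le_trans (Set.ncard_le_ncard ?_ (hTM x (hKE₂ hx)).1) (hTM x (hKE₂ hx)).2
    rintro j ⟨y, hy, hyK⟩
    exact ⟨y, hy, hKE₂ hyK⟩
  -- window of scales
  set W : ℤ → Finset ℤ :=
    fun j => (Finset.Icc (j-3) (j + (d:ℤ))).filter (fun m => Even m) with hWdef
  -- the probability measures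
  set ν : Measure ℝ := volume.restrict (Set.Ico (0:ℝ) 48) with hνdef
  haveI hνfin : IsFiniteMeasure ν :=
    ⟨by rw [hνdef, Measure.restrict_apply_univ, Real.volume_Ico]; exact ENNReal.ofReal_lt_top⟩
  set P : Measure (Fin d → ℝ) := Measure.pi (fun _ => ν) with hPdef
  set μ' : Measure (Euc d) := μH[n].restrict K with hμ'def
  haveI hμ'fin : IsFiniteMeasure μ' :=
    ⟨by rw [hμ'def, Measure.restrict_apply_univ]
        exact lt_of_le_of_lt (measure_mono hKE₂) hfinE₂⟩
  -- the random set of kept points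
  set keptS : Set (Euc d × (Fin d → ℝ)) :=
    ⋂ j : ℤ, ((Sj j)ᶜ ×ˢ (univ : Set (Fin d → ℝ))) ∪
      (⋂ m ∈ W j, ⋂ ℓ : Fin d,
        {p : Euc d × (Fin d → ℝ) | Int.fract ((2:ℝ)^m * (p.1 ℓ + p.2 ℓ)) < 1/8}) with hkept
  have hcoordmeas : ∀ ℓ : Fin d, Measurable fun x : Euc d => x ℓ := by
    intro ℓ
    exact ((continuous_apply ℓ).comp (PiLp.continuous_ofLp (p := 2) (β := fun _ : Fin d => ℝ))).measurable
  have hkeptmeas : MeasurableSet keptS := by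
    rw [hkept]
    refine MeasurableSet.iInter (fun j => ?_)
    refine MeasurableSet.union
      ((hSjclosed j).measurableSet.compl.prod MeasurableSet.univ) ?_
    refine MeasurableSet.biInter (Set.to_countable _) (fun m _ => ?_)
    refine MeasurableSet.iInter (fun ℓ => ?_)
    refine measurableSet_lt ?_ measurable_const
    exact Measurable.fract (Measurable.const_mul
      (((hcoordmeas ℓ).comp measurable_fst).add
        ((measurable_pi_apply ℓ).comp measurable_snd)) _)
  have hsec1 : ∀ ω : Fin d → ℝ, MeasurableSet {x : Euc d | (x, ω) ∈ keptS} :=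
    fun ω => measurable_prodMk_right hkeptmeas
  -- pointwise probability bound
  have hperx : ∀ x, ∀ hx : x ∈ K, ENNReal.ofReal (ρ^d) ≤ P {ω | (x, ω) ∈ keptS} := by
    intro x hx
    set Bt : Finset ℤ := (hBfin x hx).toFinset with hBt
    set Sx : Finset ℤ := Bt.biUnion W with hSx
    have hSxcard : Sx.card ≤ K₀ := by
      refine le_trans Finset.card_biUnion_le ?_
      have h1 : ∀ j ∈ Bt, (W j).card ≤ d + 4 := by
        intro j _
        refine le_trans (Finset.card_filter_le _ _) ?_
        rw [Int.card_Icc]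
        omega
      refine le_trans (Finset.sum_le_sum h1) ?_
      rw [Finset.sum_const, smul_eq_mul]
      calc Bt.card * (d + 4) ≤ M * (d+4) :=
            Nat.mul_le_mul_right _ (hBcard x hx)
        _ = K₀ := by rw [hK₀def]; ring
    have hSxmem : ∀ s ∈ Sx, Even s ∧ (-5:ℤ) ≤ s := by
      intro s hs
      rw [hSx, Finset.mem_biUnion] at hs
      obtain ⟨j, hj, hsW⟩ := hs
      have hj2 : (-2:ℤ) ≤ j := hjge j x hx ((hBfin x hx).mem_toFinset.1 hj)
      rw [hWdef, Finset.mem_filter, Finset.mem_Icc] at hsW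
      exact ⟨hsW.2, by omega⟩
    set G : Fin d → Set ℝ := fun ℓ => (fun t => x ℓ + t) ⁻¹' (Zset Sx) with hG
    have hGmeas : ∀ ℓ, MeasurableSet (G ℓ) :=
      fun ℓ => (measurableSet_Zset Sx).preimage (measurable_const.add measurable_id)
    have hpisub : Set.pi univ G ⊆ {ω : Fin d → ℝ | (x, ω) ∈ keptS} := by
      intro ω hω
      have hωG : ∀ ℓ : Fin d, (x ℓ + ω ℓ) ∈ Zset Sx := fun ℓ => hω ℓ (mem_univ ℓ)
      show (x, ω) ∈ keptS
      rw [hkept]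
      refine Set.mem_iInter.2 (fun j => ?_)
      by_cases hxSj : x ∈ Sj j
      · refine Set.mem_union_right _ ?_
        refine Set.mem_iInter₂.2 (fun m hm => Set.mem_iInter.2 (fun ℓ => ?_))
        have hmS : m ∈ Sx :=
          Finset.mem_biUnion.2 ⟨j, (hBfin x hx).mem_toFinset.2 hxSj, hm⟩
        exact hωG ℓ m hmS
      · exact Set.mem_union_left _ ⟨hxSj, mem_univ _⟩
    have hGvol : ∀ ℓ : Fin d, ENNReal.ofReal ρ ≤ ν (G ℓ) := by
      intro ℓ
      rw [hνdef, Measure.restrict_apply (hGmeas ℓ)]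
      set a : ℝ := x ℓ with ha
      have hinter : G ℓ ∩ Set.Ico 0 48 =
          (fun t => a + t) ⁻¹' (Zset Sx ∩ Set.Ico a (a + 48)) := by
        ext t
        simp only [hG, mem_inter_iff, mem_preimage, mem_Ico]
        constructor
        · rintro ⟨h1, h2, h3⟩; exact ⟨h1, by linarith, by linarith⟩
        · rintro ⟨h1, h2, h3⟩; exact ⟨h1, by linarith, by linarith⟩
      rw [hinter, measure_preimage_add]
      set kc : ℤ := ⌈a / 32⌉ with hkc
      have h32k : a ≤ 32 * (kc:ℝ) ∧ 32 * (kc:ℝ) < a + 32 := by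
        constructor
        · have := Int.le_ceil (a / 32)
          have : a / 32 ≤ (kc:ℝ) := this
          linarith
        · have := Int.ceil_lt_add_one (a / 32)
          have : (kc:ℝ) < a / 32 + 1 := this
          linarith
      have hpow32 : (2:ℝ)^(1-(-4:ℤ)) = 32 := by norm_num
      have hpow16 : (2:ℝ)^(-(-4:ℤ)) = 16 := by norm_num
      have hsubI : Set.Ico ((kc:ℝ) * 2^(1-(-4:ℤ))) ((kc:ℝ)*2^(1-(-4:ℤ)) + 2^(-(-4:ℤ)))
          ⊆ Set.Ico a (a+48) := by
        rw [hpow32, hpow16]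
        intro t ht
        rw [mem_Ico] at ht ⊢
        constructor
        · linarith [ht.1, h32k.1]
        · have := ht.2
          linarith [h32k.2]
      have hzv := zset_volume Sx.card Sx rfl (fun s hs => (hSxmem s hs).1) (-4) kc
        (fun s hs => by have := (hSxmem s hs).2; omega)
      refine le_trans ?_ (le_trans hzv
        (measure_mono (inter_subset_inter_right _ hsubI)))
      apply ENNReal.ofReal_le_ofReal
      rw [hpow16, hρdef]
      have hmono : (8:ℝ)^(-(K₀:ℤ)) ≤ 8^(-(Sx.card:ℤ)) := by
        apply zpow_le_zpow_right₀ (by norm_num)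
        have : (Sx.card : ℤ) ≤ (K₀ : ℤ) := by exact_mod_cast hSxcard
        omega
      nlinarith [zpow_pos (show (0:ℝ) < 8 by norm_num) (-(Sx.card:ℤ))]
    calc ENNReal.ofReal (ρ^d) = (ENNReal.ofReal ρ)^d := by
          rw [ENNReal.ofReal_pow (le_of_lt hρpos)]
      _ = ∏ _ℓ : Fin d, ENNReal.ofReal ρ := by
          rw [Finset.prod_const, Finset.card_univ, Fintype.card_fin]
      _ ≤ ∏ ℓ : Fin d, ν (G ℓ) := Finset.prod_le_prod' (fun ℓ _ => hGvol ℓ)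
      _ = P (Set.pi univ G) := by rw [hPdef, Measure.pi_pi]
      _ ≤ P {ω | (x, ω) ∈ keptS} := measure_mono hpisub
  -- Fubini: lower bound for the product measure of keptS
  have hIlow : ENNReal.ofReal (ρ^d) * ENNReal.ofReal (τ/2) ≤ (μ'.prod P) keptS := by
    rw [Measure.prod_apply hkeptmeas]
    have hae : ∀ᵐ x ∂μ', ENNReal.ofReal (ρ^d) ≤ P (Prod.mk x ⁻¹' keptS) := by
      filter_upwards [ae_restrict_mem hKmeas] with x hx
      exact hperx x hx
    calc ENNReal.ofReal (ρ^d) * ENNReal.ofReal (τ/2)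
        ≤ ENNReal.ofReal (ρ^d) * μ' univ := by
          apply mul_le_mul_right
          rw [hμ'def, Measure.restrict_apply_univ]
          exact hμK
      _ = ∫⁻ _, ENNReal.ofReal (ρ^d) ∂μ' := (lintegral_const _).symm
      _ ≤ ∫⁻ x, P (Prod.mk x ⁻¹' keptS) ∂μ' := lintegral_mono_ae hae
  have hPuniv : P Set.univ = ENNReal.ofReal (48^d) := by
    rw [hPdef, Measure.pi_univ]
    have hν48 : ν Set.univ = ENNReal.ofReal 48 := by
      rw [hνdef, Measure.restrict_apply_univ, Real.volume_Ico]
      norm_num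
    rw [hν48, Finset.prod_const, Finset.card_univ, Fintype.card_fin,
      ← ENNReal.ofReal_pow (by norm_num)]
  have hexists : ∃ ω : Fin d → ℝ, ENNReal.ofReal c ≤ μH[n] (K ∩ {x | (x, ω) ∈ keptS}) := by
    by_contra hcon
    push_neg at hcon
    have hup : (μ'.prod P) keptS ≤ ENNReal.ofReal c * ENNReal.ofReal (48^d) := by
      rw [Measure.prod_apply_symm hkeptmeas]
      have hμ'sec : ∀ ω : Fin d → ℝ,
          μ' ((fun x => (x, ω)) ⁻¹' keptS) = μH[n] (K ∩ {x | (x, ω) ∈ keptS}) := by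
        intro ω
        have hpre : (fun x => (x, ω)) ⁻¹' keptS = {x : Euc d | (x, ω) ∈ keptS} := rfl
        rw [hpre, hμ'def, Measure.restrict_apply (hsec1 ω), inter_comm]
      calc ∫⁻ ω, μ' ((fun x => (x, ω)) ⁻¹' keptS) ∂P
          ≤ ∫⁻ _, ENNReal.ofReal c ∂P :=
            lintegral_mono (fun ω => by rw [hμ'sec ω]; exact (hcon ω).le)
        _ = ENNReal.ofReal c * P univ := lintegral_const _
        _ = _ := by rw [hPuniv]
    have hcomb := le_trans hIlow hup
    rw [← ENNReal.ofReal_mul (by positivity), ← ENNReal.ofReal_mul (by positivity)] at hcomb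
    rw [ENNReal.ofReal_le_ofReal_iff (by positivity)] at hcomb
    have heq : c * 48^d = (τ/4) * ρ^d := by
      rw [hcdef, div_pow]
      have h48 : (48:ℝ)^d ≠ 0 := by positivity
      field_simp
    rw [heq] at hcomb
    have hρd : (0:ℝ) < ρ^d := by positivity
    nlinarith
  -- assemble E₃
  obtain ⟨ω, hω⟩ := hexists
  refine ⟨K ∩ {x | (x, ω) ∈ keptS}, hKmeas.inter (hsec1 ω), fun x hx => hKE₂ hx.1, hω, ?_⟩
  intro x hx
  obtain ⟨hxK, hxkept⟩ := hx
  have hempty : {j : ℤ | (vertConeAnn n x (θ/2) (2^(-j)) (2^(-j-1)) ∩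
      (K ∩ {x' : Euc d | (x', ω) ∈ keptS})).Nonempty} = ∅ := by
    rw [Set.eq_empty_iff_forall_notMem]
    rintro j ⟨y, ⟨⟨hyc, hyball⟩, hyK, hykept⟩⟩
    have hcone : ‖projCLM (coordSubspace d n) (x - y)‖ ≤ θ/2 * ‖x - y‖ := hyc
    have hd1 : dist y x ≤ 2^(-j) := hyball.1
    have hd2 : (2:ℝ)^(-j-1) ≤ dist y x := not_lt.1 hyball.2
    have hzpos : (0:ℝ) < 2^(-j-1) := zpow_pos two_pos _
    have hθhalf : ∀ w : Euc d, θ/2 * ‖w‖ ≤ θ * ‖w‖ := by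
      intro w
      nlinarith [norm_nonneg w]
    have hxSj : x ∈ Sj j := ⟨y, ⟨⟨le_trans hcone (hθhalf _), hyball⟩, hyK⟩⟩
    have hySj : y ∈ Sj j := by
      refine ⟨x, ⟨⟨?_, ⟨?_, ?_⟩⟩, hxK⟩⟩
      · have h1 : ‖projCLM (coordSubspace d n) (y - x)‖
            = ‖projCLM (coordSubspace d n) (x - y)‖ := by
          rw [show y - x = -(x - y) by abel, map_neg, norm_neg]
        have h2 : ‖y - x‖ = ‖x - y‖ := norm_sub_rev _ _
        show ‖projCLM (coordSubspace d n) (y - x)‖ ≤ θ * ‖y - x‖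
        rw [h1, h2]
        exact le_trans hcone (hθhalf _)
      · rw [mem_closedBall, dist_comm]
        exact hd1
      · intro hxb
        exact hyball.2 (mem_ball.2 (by rw [dist_comm]; exact mem_ball.1 hxb))
    -- the difference vector
    set z : Euc d := x - y with hz
    have hznorm : ‖z‖ = dist y x := by rw [hz, ← dist_eq_norm, dist_comm]
    have hzl : (2:ℝ)^(-j-1) ≤ ‖z‖ := by rw [hznorm]; exact hd2
    have hzu : ‖z‖ ≤ 2^(-j) := by rw [hznorm]; exact hd1
    have hznpos : 0 < ‖z‖ := lt_of_lt_of_le hzpos hzl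
    have hPz : ‖projCLM (coordSubspace d n) z‖^2 ≤ (1/4) * ‖z‖^2 := by
      have h0 : 0 ≤ ‖projCLM (coordSubspace d n) z‖ := norm_nonneg _
      have h1 : ‖projCLM (coordSubspace d n) z‖ ≤ (1/2) * ‖z‖ := by
        nlinarith [norm_nonneg z]
      nlinarith [mul_le_mul h1 h1 h0 (by positivity : (0:ℝ) ≤ (1/2)*‖z‖)]
    obtain ⟨ℓ, hℓn, hℓbig⟩ := exists_big_coord hnd z hPz
    set D : ℝ := |z ℓ| with hD
    have hDsq : D^2 = (z ℓ)^2 := sq_abs _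
    have hDle : D ≤ ‖z‖ := by
      have h1 : (z ℓ)^2 ≤ ‖z‖^2 := by
        rw [normsq_eq_sum]
        exact Finset.single_le_sum (f := fun i => (z i)^2)
          (fun i _ => sq_nonneg _) (Finset.mem_univ ℓ)
      by_contra hcon'
      push_neg at hcon'
      nlinarith [abs_nonneg (z ℓ), norm_nonneg z]
    have hsq2 : ∀ e : ℤ, ((2:ℝ)^e)^2 = (2:ℝ)^(2*e) := by
      intro e
      rw [pow_two, ← zpow_add₀ two_ne]
      congr 1
      ring
    have h2dle : (2:ℝ) * d ≤ (2:ℝ)^(2*((d:ℤ)+1)) := by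
      have hd4 : (d:ℝ) < 2^d := by exact_mod_cast Nat.lt_two_pow_self (n := d)
      have hcast : (2:ℝ)^(2*((d:ℤ)+1)) = ((2:ℝ)^(d:ℤ))^2 * 4 := by
        rw [show (4:ℝ) = (2:ℝ)^(2:ℤ) by norm_num, pow_two,
          ← zpow_add₀ two_ne, ← zpow_add₀ two_ne]
        congr 1
        ring
      have hdz : (2:ℝ)^(d:ℤ) = (2:ℝ)^(d:ℕ) := by
        rw [zpow_natCast]
      rw [hcast, hdz]
      have h1 : (1:ℝ) ≤ 2^d := one_le_pow₀ (by norm_num)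
      nlinarith [hd4, h1, sq_nonneg ((2:ℝ)^d - 1)]
    have hDge : (2:ℝ)^(-j - (d:ℤ) - 2) ≤ D := by
      have hA : (0:ℝ) < (2:ℝ)^(-j-(d:ℤ)-2) := zpow_pos two_pos _
      have hdR : (0:ℝ) < 2 * d := by
        have : (1:ℕ) ≤ d := by omega
        have : (1:ℝ) ≤ d := by exact_mod_cast this
        linarith
      have hsq : ((2:ℝ)^(-j-(d:ℤ)-2))^2 ≤ D^2 := by
        rw [hDsq]
        refine le_trans ?_ hℓbig
        rw [le_div_iff₀ hdR]
        have hstep : ((2:ℝ)^(-j-(d:ℤ)-2))^2 * (2*d)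
            ≤ ((2:ℝ)^(-j-(d:ℤ)-2))^2 * (2:ℝ)^(2*((d:ℤ)+1)) := by
          apply mul_le_mul_of_nonneg_left h2dle (sq_nonneg _)
        refine le_trans hstep ?_
        have heq2 : ((2:ℝ)^(-j-(d:ℤ)-2))^2 * (2:ℝ)^(2*((d:ℤ)+1)) = ((2:ℝ)^(-j-1))^2 := by
          rw [hsq2, hsq2, ← zpow_add₀ two_ne]
          congr 1
          ring
        rw [heq2]
        nlinarith [zpow_pos (show (0:ℝ) < 2 by norm_num) (-j-1), hzl]
      nlinarith [abs_nonneg (z ℓ)]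
    have hDpos : 0 < D := lt_of_lt_of_le (zpow_pos two_pos _) hDge
    obtain ⟨kk, hkk⟩ := exists_mem_Ico_zpow hDpos one_lt_two
    rw [Set.mem_Ico] at hkk
    set m : ℤ := if Even (-kk-2) then -kk-2 else -kk-3 with hm
    have hmEven : Even m := by
      rcases Int.even_or_odd (-kk-2) with he | ho
      · rw [hm, if_pos he]; exact he
      · rw [hm, if_neg (Int.not_even_iff_odd.2 ho)]
        obtain ⟨t, ht⟩ := ho
        exact ⟨t, by omega⟩
    have hmrange : -kk-3 ≤ m ∧ m ≤ -kk-2 := by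
      constructor <;> (rw [hm]; split <;> omega)
    have hkle : kk ≤ -j := by
      have h1 : (2:ℝ)^kk ≤ (2:ℝ)^(-j) := le_trans hkk.1 (le_trans hDle hzu)
      exact (zpow_le_zpow_iff_right₀ (by norm_num : (1:ℝ) < 2)).1 h1
    have hkge : -j - (d:ℤ) - 2 < kk + 1 := by
      have h1 : (2:ℝ)^(-j-(d:ℤ)-2) < (2:ℝ)^(kk+1) := lt_of_le_of_lt hDge hkk.2
      exact (zpow_lt_zpow_iff_right₀ (by norm_num : (1:ℝ) < 2)).1 h1
    have hmW : m ∈ W j := by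
      rw [hWdef, Finset.mem_filter, Finset.mem_Icc]
      refine ⟨⟨by omega, by omega⟩, hmEven⟩
    have hband1 : (2:ℝ)^(-m-3) ≤ D :=
      le_trans (zpow_le_zpow_right₀ (by norm_num) (by omega)) hkk.1
    have hband2 : D < (2:ℝ)^(-m-1) :=
      lt_of_lt_of_le hkk.2 (zpow_le_zpow_right₀ (by norm_num) (by omega))
    have hfract : ∀ w : Euc d, (w, ω) ∈ keptS → w ∈ Sj j →
        Int.fract ((2:ℝ)^m * (w ℓ + ω ℓ)) < 1/8 := by
      intro w hw hwSj
      rw [hkept] at hw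
      have h1 := Set.mem_iInter.1 hw j
      rcases h1 with h1 | h1
      · exact absurd hwSj h1.1
      · exact Set.mem_iInter.1 (Set.mem_iInter₂.1 h1 m hmW) ℓ
    have hxf := hfract x hxkept hxSj
    have hyf := hfract y hykept hySj
    set A : ℝ := (2:ℝ)^m * (x ℓ + ω ℓ) with hA
    set B : ℝ := (2:ℝ)^m * (y ℓ + ω ℓ) with hB
    have hABD : A - B = (2:ℝ)^m * (z ℓ) := by
      rw [hA, hB, hz]
      have hsub : (x - y) ℓ = x ℓ - y ℓ := rfl
      rw [hsub]
      ring
    have hmpos : (0:ℝ) < (2:ℝ)^m := zpow_pos two_pos _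
    have habs : |A - B| = (2:ℝ)^m * D := by
      rw [hABD, abs_mul, abs_of_pos hmpos, hD]
    have h81 : (1:ℝ)/8 ≤ |A - B| := by
      rw [habs]
      have h1 : (2:ℝ)^m * (2:ℝ)^(-m-3) = 1/8 := by
        rw [← zpow_add₀ two_ne, show m + (-m-3) = -3 by ring]
        norm_num
      calc (1:ℝ)/8 = (2:ℝ)^m * (2:ℝ)^(-m-3) := h1.symm
        _ ≤ (2:ℝ)^m * D := mul_le_mul_of_nonneg_left hband1 hmpos.le
    have h12 : |A - B| < 1/2 := by
      rw [habs]
      have h1 : (2:ℝ)^m * (2:ℝ)^(-m-1) = 1/2 := by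
        rw [← zpow_add₀ two_ne, show m + (-m-1) = -1 by ring]
        norm_num
      calc (2:ℝ)^m * D < (2:ℝ)^m * (2:ℝ)^(-m-1) := by
            exact mul_lt_mul_of_pos_left hband2 hmpos
        _ = 1/2 := h1
    have hfa := Int.fract_nonneg A
    have hfb := Int.fract_nonneg B
    have h1A := Int.floor_add_fract A
    have h1B := Int.floor_add_fract B
    set g : ℤ := ⌊A⌋ - ⌊B⌋ with hg
    have hkey : A - B = (g:ℝ) + (Int.fract A - Int.fract B) := by
      rw [hg]
      push_cast
      linarith
    have hfd : |Int.fract A - Int.fract B| < 1/8 := by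
      rw [abs_sub_lt_iff]
      constructor <;> linarith
    have hgsmall : |(g:ℝ)| < 1 := by
      have h1 : (g:ℝ) = (A - B) - (Int.fract A - Int.fract B) := by linarith [hkey]
      rw [h1, sub_eq_add_neg]
      calc |(A - B) + -(Int.fract A - Int.fract B)|
          ≤ |A - B| + |-(Int.fract A - Int.fract B)| := abs_add_le _ _
        _ = |A - B| + |Int.fract A - Int.fract B| := by rw [abs_neg]
        _ < 1/2 + 1/8 := add_lt_add_of_lt_of_lt h12 hfd
        _ < 1 := by norm_num
    have hg0 : g = 0 := by
      have h2 : -1 < g ∧ g < 1 := by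
        have := abs_lt.1 hgsmall
        exact ⟨by exact_mod_cast this.1, by exact_mod_cast this.2⟩
      omega
    have hcontr : |A - B| < 1/8 := by
      rw [hkey, hg0]
      push_cast
      simpa using hfd
    linarith
  constructor
  · rw [hempty]
    exact Set.finite_empty
  · rw [hempty]
    simp


end
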